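/- Let n ≥ 1 and let f, g ∈ ℤ[X] be polynomials with deg f < n and deg g < n. Let r be the remainder of f·g upon division by X^n + 1. Then every coefficient of r satisfies |r_i| ≤ sqrt(Σ_j f_j²) · sqrt(Σ_j g_j²), i.e. each coefficient of the product reduced modulo X^n+1 is bounded by the product of the Euclidean norms of the coefficient vectors of f and g. -/
import Mathlib


open Polynomial Finset

/-- For `f, g ∈ ℤ[X]` of degree `< n`, each coefficient of the
remainder of `f·g` modulo `X^n + 1` is bounded by the product of the Euclidean
norms of the coefficient vectors of `f` and `g`. -/
theorem mulmod_coeff_euclidean_bound (n : ℕ) (hn : 1 ≤ n) (f g : Polynomial ℤ)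
    (hf : f.degree < n) (hg : g.degree < n) :
    ∀ i, (|((f * g) %ₘ (X ^ n + 1)).coeff i| : ℝ) ≤
      Real.sqrt (∑ j ∈ f.support, ((f.coeff j : ℝ)) ^ 2) *
        Real.sqrt (∑ j ∈ g.support, ((g.coeff j : ℝ)) ^ 2) := by
  intro i
  have hRHS0 : (0:ℝ) ≤ Real.sqrt (∑ j ∈ f.support, ((f.coeff j : ℝ)) ^ 2) *
      Real.sqrt (∑ j ∈ g.support, ((g.coeff j : ℝ)) ^ 2) :=
    mul_nonneg (Real.sqrt_nonneg _) (Real.sqrt_nonneg _)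
  by_cases hf0 : f = 0
  · simpa [hf0] using hRHS0
  by_cases hg0 : g = 0
  · simpa [hg0] using hRHS0
  have hm : ((X:ℤ[X]) ^ n + 1).Monic := by
    simpa using monic_X_pow_add_C (R := ℤ) (a := 1) (by omega : n ≠ 0)
  have hdm : ((X:ℤ[X]) ^ n + 1).degree = n := by
    simpa using degree_X_pow_add_C (R := ℤ) (by omega : 0 < n) 1
  rcases lt_or_ge i n with hi | hi
  swap
  · have hz : ((f * g) %ₘ (X ^ n + 1)).coeff i = 0 := by
      apply coeff_eq_zero_of_degree_lt
      calc ((f * g) %ₘ (X ^ n + 1)).degree < ((X:ℤ[X]) ^ n + 1).degree :=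
            degree_modByMonic_lt _ hm
        _ = n := hdm
        _ ≤ i := by exact_mod_cast hi
    simpa [hz] using hRHS0
  have hnf : f.natDegree < n := (natDegree_lt_iff_degree_lt hf0).2 hf
  have hng : g.natDegree < n := (natDegree_lt_iff_degree_lt hg0).2 hg
  set h : ℤ[X] := f * g with hh
  -- h has no coefficients at indices ≥ 2n
  have hhz : ∀ k, 2 * n ≤ k → h.coeff k = 0 := by
    intro k hk
    apply coeff_eq_zero_of_natDegree_lt
    calc h.natDegree ≤ f.natDegree + g.natDegree := natDegree_mul_le
      _ < 2 * n := by omega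
      _ ≤ k := hk
  -- explicit remainder
  set q : ℤ[X] := ∑ k ∈ Finset.range n, C (h.coeff (n + k)) * X ^ k with hq
  set r : ℤ[X] := ∑ k ∈ Finset.range n, C (h.coeff k - h.coeff (k + n)) * X ^ k with hrdef
  have key : ∀ (c : ℕ → ℤ) (j : ℕ),
      (∑ k ∈ Finset.range n, C (c k) * X ^ k).coeff j = if j < n then c j else 0 := by
    intro c j
    rw [finset_sum_coeff]
    simp only [coeff_C_mul, coeff_X_pow]
    rcases lt_or_ge j n with hj | hj
    · rw [if_pos hj, Finset.sum_eq_single_of_mem j (Finset.mem_range.2 hj)]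
      · simp
      · intro b _ hb
        rw [if_neg (Ne.symm hb), mul_zero]
    · rw [if_neg (by omega)]
      apply Finset.sum_eq_zero
      intro k hk
      simp only [Finset.mem_range] at hk
      rw [if_neg (by omega), mul_zero]
  have hqc : ∀ j, q.coeff j = if j < n then h.coeff (n + j) else 0 := fun j => key _ j
  have hrc : ∀ j, r.coeff j = if j < n then h.coeff j - h.coeff (j + n) else 0 :=
    fun j => key _ j
  have hmain : h %ₘ ((X:ℤ[X]) ^ n + 1) = r := by
    refine (div_modByMonic_unique q r hm ⟨?_, ?_⟩).2
    · ext j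
      rw [coeff_add, add_mul, one_mul, coeff_add, hrc j]
      have hXq : ((X:ℤ[X]) ^ n * q).coeff j = if n ≤ j then q.coeff (j - n) else 0 := by
        rcases le_or_gt n j with hj | hj
        · rw [if_pos hj, ← Nat.sub_add_cancel hj, coeff_X_pow_mul, Nat.sub_add_cancel hj]
        · rw [if_neg (not_le.2 hj), coeff_X_pow_mul']
          simp [Nat.not_le.2 hj]
      rw [hXq, hqc j]
      rcases lt_or_ge j n with hj | hj
      · simp [if_pos hj, if_neg (Nat.not_le.2 hj), Nat.add_comm j n]
      · rw [if_neg (by omega), if_pos hj, if_neg (by omega), hqc (j - n)]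
        rcases lt_or_ge (j - n) n with hj2 | hj2
        · rw [if_pos hj2]
          have : n + (j - n) = j := by omega
          rw [this]; ring
        · rw [if_neg (by omega)]
          have := hhz j (by omega)
          simp [this]
    · rw [hdm]
      apply lt_of_le_of_lt (degree_sum_le _ _)
      apply Finset.sup_lt_iff (by exact_mod_cast WithBot.bot_lt_coe n) |>.2
      intro k hk
      apply lt_of_le_of_lt (degree_C_mul_X_pow_le _ _)
      exact_mod_cast Nat.cast_lt.2 (Finset.mem_range.1 hk)
  rw [hh] at hmain
  rw [hmain, hrc i, if_pos hi]
  -- coefficient formula: express as inner product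
  set G : ℕ → ℝ := fun j => if j ≤ i then (g.coeff (i - j) : ℝ) else -(g.coeff (i + n - j) : ℝ)
    with hG
  have hcoeff : ((h.coeff i - h.coeff (i + n) : ℤ) : ℝ)
      = ∑ j ∈ Finset.range n, (f.coeff j : ℝ) * G j := by
    have h1 : h.coeff i = ∑ j ∈ Finset.range (i + 1), f.coeff j * g.coeff (i - j) := by
      rw [hh, coeff_mul, Finset.Nat.sum_antidiagonal_eq_sum_range_succ_mk]
    have h2 : h.coeff (i + n) = ∑ j ∈ Finset.range (i + n + 1), f.coeff j * g.coeff (i + n - j) := by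
      rw [hh, coeff_mul, Finset.Nat.sum_antidiagonal_eq_sum_range_succ_mk]
    have h1' : h.coeff i = ∑ j ∈ Finset.range (i + 1), f.coeff j * g.coeff (i - j) := h1
    -- restrict h2 sum to Ico (i+1) n
    have h2' : h.coeff (i + n) = ∑ j ∈ Finset.Ico (i + 1) n, f.coeff j * g.coeff (i + n - j) := by
      rw [h2]
      have hss : Finset.Ico (i+1) n ⊆ Finset.range (i + n + 1) := by
        intro j hj
        simp only [Finset.mem_Ico] at hj
        simp only [Finset.mem_range]
        omega
      rw [← Finset.sum_subset hss]
      intro j hj hj'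
      simp only [Finset.mem_range, Finset.mem_Ico, not_and, not_lt] at hj hj'
      rcases le_or_gt j i with hji | hji
      · have : ¬ (i + n - j < n) := by omega
        rw [coeff_eq_zero_of_natDegree_lt (by omega : g.natDegree < i + n - j), mul_zero]
      · have hjn : n ≤ j := hj' hji
        rw [coeff_eq_zero_of_natDegree_lt (by omega : f.natDegree < j), zero_mul]
    have e1 : ∑ j ∈ Finset.Ico 0 (i+1), (f.coeff j : ℝ) * G j
        = ∑ j ∈ Finset.range (i+1), ((f.coeff j : ℝ)) * ((g.coeff (i - j) : ℝ)) := by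
      rw [Nat.Ico_zero_eq_range]
      refine Finset.sum_congr rfl fun j hj => ?_
      simp only [Finset.mem_range] at hj
      rw [hG]
      simp only [if_pos (by omega : j ≤ i)]
    have e2 : ∑ j ∈ Finset.Ico (i+1) n, (f.coeff j : ℝ) * G j
        = -∑ j ∈ Finset.Ico (i+1) n, ((f.coeff j : ℝ)) * ((g.coeff (i + n - j) : ℝ)) := by
      rw [← Finset.sum_neg_distrib]
      refine Finset.sum_congr rfl fun j hj => ?_
      simp only [Finset.mem_Ico] at hj
      rw [hG]
      simp only [if_neg (by omega : ¬ j ≤ i)]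
      ring
    have esplit : ∑ j ∈ Finset.range n, (f.coeff j : ℝ) * G j
        = ∑ j ∈ Finset.Ico 0 (i+1), (f.coeff j : ℝ) * G j
          + ∑ j ∈ Finset.Ico (i+1) n, (f.coeff j : ℝ) * G j := by
      rw [Finset.sum_Ico_consecutive _ (Nat.zero_le _) (by omega : i + 1 ≤ n),
        Nat.Ico_zero_eq_range]
    rw [h1', h2']
    push_cast
    rw [esplit, e1, e2]
    push_cast
    ring
  -- now the Cauchy–Schwarz bound
  have habs : (|(h.coeff i - h.coeff (i + n) : ℤ)| : ℝ)
      = |∑ j ∈ Finset.range n, (f.coeff j : ℝ) * G j| := by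
    rw [← hcoeff]
  rw [habs]
  -- Cauchy–Schwarz over range n
  have hCS : |∑ j ∈ Finset.range n, (f.coeff j : ℝ) * G j|
      ≤ Real.sqrt (∑ j ∈ Finset.range n, (f.coeff j : ℝ) ^ 2) *
        Real.sqrt (∑ j ∈ Finset.range n, (G j) ^ 2) := by
    rcases abs_cases (∑ j ∈ Finset.range n, (f.coeff j : ℝ) * G j) with ⟨he, _⟩ | ⟨he, _⟩
    · rw [he]
      exact Real.sum_mul_le_sqrt_mul_sqrt _ _ _
    · rw [he]
      calc -∑ j ∈ Finset.range n, (f.coeff j : ℝ) * G j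
          = ∑ j ∈ Finset.range n, (f.coeff j : ℝ) * (-G j) := by
            rw [← Finset.sum_neg_distrib]
            exact Finset.sum_congr rfl fun j _ => by ring
        _ ≤ Real.sqrt (∑ j ∈ Finset.range n, (f.coeff j : ℝ) ^ 2) *
            Real.sqrt (∑ j ∈ Finset.range n, (-G j) ^ 2) :=
            Real.sum_mul_le_sqrt_mul_sqrt _ _ _
        _ = Real.sqrt (∑ j ∈ Finset.range n, (f.coeff j : ℝ) ^ 2) *
            Real.sqrt (∑ j ∈ Finset.range n, (G j) ^ 2) := by simp [neg_sq]
  refine hCS.trans ?_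
  have hfsum : ∑ j ∈ Finset.range n, (f.coeff j : ℝ) ^ 2
      = ∑ j ∈ f.support, (f.coeff j : ℝ) ^ 2 := by
    refine (Finset.sum_subset ?_ ?_).symm
    · exact f.supp_subset_range (by omega)
    · intro j _ hj
      rw [Polynomial.notMem_support_iff.1 hj]
      norm_num
  have hGsum : ∑ j ∈ Finset.range n, (G j) ^ 2 ≤ ∑ j ∈ g.support, (g.coeff j : ℝ) ^ 2 := by
    set σ : ℕ → ℕ := fun j => if j ≤ i then i - j else i + n - j with hσ
    have hGσ : ∀ j, (G j) ^ 2 = (g.coeff (σ j) : ℝ) ^ 2 := by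
      intro j
      rw [hG, hσ]
      by_cases hji : j ≤ i <;> simp [hji]
    have hinj : ∀ a ∈ Finset.range n, ∀ b ∈ Finset.range n, σ a = σ b → a = b := by
      intro a ha b hb hab
      simp only [Finset.mem_range] at ha hb
      rw [hσ] at hab
      simp only at hab
      by_cases hai : a ≤ i <;> by_cases hbi : b ≤ i <;> simp only [hai, hbi, if_pos, if_neg,
        if_true, if_false] at hab <;> omega
    have hsub : (Finset.range n).image σ ⊆ Finset.range n := by
      intro k hk
      simp only [Finset.mem_image, Finset.mem_range] at hk ⊢
      obtain ⟨j, hj, rfl⟩ := hk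
      rw [hσ]
      by_cases hji : j ≤ i <;> simp [hji] <;> omega
    calc ∑ j ∈ Finset.range n, (G j) ^ 2
        = ∑ j ∈ Finset.range n, (g.coeff (σ j) : ℝ) ^ 2 :=
          Finset.sum_congr rfl fun j _ => hGσ j
      _ = ∑ k ∈ (Finset.range n).image σ, (g.coeff k : ℝ) ^ 2 :=
          (Finset.sum_image (f := fun k => ((g.coeff k : ℝ)) ^ 2) hinj).symm
      _ ≤ ∑ k ∈ Finset.range n, (g.coeff k : ℝ) ^ 2 :=
          Finset.sum_le_sum_of_subset_of_nonneg hsub (fun _ _ _ => sq_nonneg _)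
      _ = ∑ k ∈ g.support, (g.coeff k : ℝ) ^ 2 := by
          refine (Finset.sum_subset (g.supp_subset_range (by omega)) ?_).symm
          intro j _ hj
          rw [Polynomial.notMem_support_iff.1 hj]
          norm_num
  rw [← hfsum]
  exact mul_le_mul_of_nonneg_left (Real.sqrt_le_sqrt hGsum) (Real.sqrt_nonneg _)
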